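/- arXiv:2303.17988 — 4 statements merged into one kernel-verified Lean document; each statement's English description precedes it below -/
import Mathlib

section
/- Let g be continuous at t with g(t) > 0, and let K be a bounded kernel supported on [-1,1] with ∫K = 1. If X₁, X₂, ... are i.i.d. with density g on [0,1], t ∈ (0,1), and h_n → 0 with n h_n → ∞, then n⁻¹ Σ_{i=1}^n K_{h_n}(t - X_i) → g(t) in probability. -/
open MeasureTheory ProbabilityTheory Set Filter Finset
open scoped ENNReal NNReal

/-- If `X₁, X₂, ...` are i.i.d. with density `g` on `[0,1]`, `g` is continuous
at `t ∈ (0,1)` with `g(t) > 0`, `K` is a bounded kernel supported on `[-1,1]` with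
`∫ K = 1`, and `hₙ → 0` with `n hₙ → ∞`, then
`n⁻¹ Σ_{i<n} K_{hₙ}(t - Xᵢ) → g(t)` in probability. -/
theorem kernel_density_consistency
    {Ω : Type*} [MeasurableSpace Ω] (μ : Measure Ω) [IsProbabilityMeasure μ]
    (X : ℕ → Ω → ℝ) (hXmeas : ∀ i, Measurable (X i))
    (hXindep : iIndepFun X μ)
    (g : ℝ → ℝ) (hgpos : ∀ x, 0 ≤ g x) (hgsupp : ∀ x, x ∉ Icc (0 : ℝ) 1 → g x = 0)
    (hXdist : ∀ i, μ.map (X i) = volume.withDensity (fun x => ENNReal.ofReal (g x)))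
    (t : ℝ) (ht : t ∈ Ioo (0 : ℝ) 1) (hgt : 0 < g t) (hgc : ContinuousAt g t)
    (K : ℝ → ℝ) (hKbdd : ∃ M, ∀ u, |K u| ≤ M)
    (hKmeas : Measurable K)
    (hKsupp : ∀ u, u ∉ Icc (-1 : ℝ) 1 → K u = 0) (hK1 : ∫ u, K u = 1)
    (h : ℕ → ℝ) (hhpos : ∀ n, 0 < h n)
    (hh0 : Tendsto h atTop (nhds 0))
    (hnh : Tendsto (fun n : ℕ => (n : ℝ) * h n) atTop atTop) :
    ∀ ε > 0,
      Tendsto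
        (fun n : ℕ =>
          (μ {ω | ε ≤ |(n : ℝ)⁻¹ * ∑ i ∈ Finset.range n,
              (1 / h n) * K ((t - X i ω) / h n) - g t|}).toReal)
        atTop (nhds 0) := by
  obtain ⟨M, hM⟩ := hKbdd
  have hM0 : 0 ≤ M := (abs_nonneg _).trans (hM 0)
  intro ε hε
  -- the distribution measure
  set ν : Measure ℝ := volume.withDensity (fun x => ENNReal.ofReal (g x)) with hνdef
  haveI hprob : IsProbabilityMeasure ν := by
    rw [← hXdist 0]
    exact Measure.isProbabilityMeasure_map (hXmeas 0).aemeasurable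
  have hac : ν ≪ (volume : Measure ℝ) := by
    refine Measure.AbsolutelyContinuous.mk fun s hs hs0 => ?_
    rw [hνdef, withDensity_apply _ hs]
    exact setLIntegral_measure_zero s _ hs0
  set w : ℝ → ℝ≥0∞ := ν.rnDeriv volume with hwdef
  have hwmeas : Measurable w := ν.measurable_rnDeriv volume
  have hwd : volume.withDensity w = ν := Measure.withDensity_rnDeriv_eq ν volume hac
  have hwfin : ∀ᵐ x ∂(volume : Measure ℝ), w x < ⊤ := Measure.rnDeriv_lt_top ν volume
  have hwd' : volume.withDensity (fun x => ((w x).toNNReal : ℝ≥0∞)) = ν := by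
    rw [← hwd]
    refine withDensity_congr_ae ?_
    filter_upwards [hwfin] with x hx
    rw [ENNReal.coe_toNNReal hx.ne]
  -- K is integrable
  have hindint : ∀ (c a b' : ℝ), Integrable ((Icc a b').indicator fun _ => c) := by
    intro c a b'
    rw [integrable_indicator_iff measurableSet_Icc]
    exact integrableOn_const measure_Icc_lt_top.ne
  have hKint : Integrable K := by
    refine Integrable.mono' (hindint M (-1) 1)
      hKmeas.aestronglyMeasurable (ae_of_all _ fun u => ?_)
    rw [Real.norm_eq_abs]
    by_cases hu : u ∈ Icc (-1 : ℝ) 1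
    · rw [Set.indicator_of_mem hu]; exact hM u
    · rw [hKsupp u hu, Set.indicator_of_notMem hu]; simp
  set I : ℝ := ∫ u, |K u| with hIdef
  have hI0 : 0 ≤ I := integral_nonneg fun u => abs_nonneg _
  set δ : ℝ := ε / (2 * (I + 1)) with hδdef
  have hδ : 0 < δ := by positivity
  have hδI : δ * I ≤ ε / 2 := by
    rw [hδdef, div_mul_eq_mul_div, div_le_div_iff₀ (by positivity) (by norm_num)]
    nlinarith
  -- continuity of g at t
  obtain ⟨r, hr0, hrb⟩ : ∃ r > 0, ∀ x : ℝ, |x - t| < r → |g x - g t| < δ := by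
    obtain ⟨r, hr0, hr⟩ := Metric.continuousAt_iff.mp hgc δ hδ
    exact ⟨r, hr0, fun x hx => hr (by rwa [Real.dist_eq])⟩
  set J : Set ℝ := Ioo (t - r) (t + r) with hJdef
  have hJmeas : MeasurableSet J := measurableSet_Ioo
  have hgJ : ∀ x ∈ J, g t - δ ≤ g x ∧ g x ≤ g t + δ := by
    intro x hx
    have h1 : |x - t| < r := by
      rw [abs_sub_lt_iff]
      exact ⟨by linarith [hx.2], by linarith [hx.1]⟩
    have h2 := hrb x h1
    rw [abs_lt] at h2
    exact ⟨by linarith [h2.1], by linarith [h2.2]⟩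
  have hgt_up : (0 : ℝ) ≤ g t + δ := by linarith
  -- comparison of ν with Lebesgue on J
  have lint_aux : ∀ A : Set ℝ, MeasurableSet A → A ⊆ J →
      ν A ≤ ENNReal.ofReal (g t + δ) * volume A ∧
        ENNReal.ofReal (g t - δ) * volume A ≤ ν A := by
    intro A hA hAJ
    have hνA : ν A = ∫⁻ x in A, ENNReal.ofReal (g x) ∂volume := by
      rw [hνdef, withDensity_apply _ hA]
    constructor
    · rw [hνA, ← lintegral_indicator hA]
      calc ∫⁻ x, A.indicator (fun y => ENNReal.ofReal (g y)) x ∂volume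
          ≤ ∫⁻ x, A.indicator (fun _ => ENNReal.ofReal (g t + δ)) x ∂volume := by
            refine lintegral_mono fun x => ?_
            by_cases hx : x ∈ A
            · simpa [Set.indicator_of_mem hx] using ENNReal.ofReal_le_ofReal (hgJ x (hAJ hx)).2
            · simp [Set.indicator_of_notMem hx]
        _ = ENNReal.ofReal (g t + δ) * volume A := by
            rw [lintegral_indicator hA, setLIntegral_const]
    · rw [hνA, ← lintegral_indicator hA]
      calc ENNReal.ofReal (g t - δ) * volume A
          = ∫⁻ x, A.indicator (fun _ => ENNReal.ofReal (g t - δ)) x ∂volume := by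
            rw [lintegral_indicator hA, setLIntegral_const]
        _ ≤ ∫⁻ x, A.indicator (fun y => ENNReal.ofReal (g y)) x ∂volume := by
            refine lintegral_mono fun x => ?_
            by_cases hx : x ∈ A
            · simpa [Set.indicator_of_mem hx] using ENNReal.ofReal_le_ofReal (hgJ x (hAJ hx)).1
            · simp [Set.indicator_of_notMem hx]
  have hup : w ≤ᵐ[volume.restrict J] fun _ => ENNReal.ofReal (g t + δ) := by
    refine ae_le_of_forall_setLIntegral_le_of_sigmaFinite hwmeas fun s hs _ => ?_
    rw [Measure.restrict_restrict hs]
    have hsJ : MeasurableSet (s ∩ J) := hs.inter hJmeas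
    calc ∫⁻ x in s ∩ J, w x ∂volume = ν (s ∩ J) := by rw [← hwd, withDensity_apply _ hsJ]
      _ ≤ ENNReal.ofReal (g t + δ) * volume (s ∩ J) :=
          (lint_aux (s ∩ J) hsJ Set.inter_subset_right).1
      _ = ∫⁻ _x in s ∩ J, ENNReal.ofReal (g t + δ) ∂volume := (setLIntegral_const _ _).symm
  have hlow : (fun _ : ℝ => ENNReal.ofReal (g t - δ)) ≤ᵐ[volume.restrict J] w := by
    refine ae_le_of_forall_setLIntegral_le_of_sigmaFinite measurable_const fun s hs _ => ?_
    rw [Measure.restrict_restrict hs]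
    have hsJ : MeasurableSet (s ∩ J) := hs.inter hJmeas
    calc ∫⁻ _x in s ∩ J, ENNReal.ofReal (g t - δ) ∂volume
        = ENNReal.ofReal (g t - δ) * volume (s ∩ J) := setLIntegral_const _ _
      _ ≤ ν (s ∩ J) := (lint_aux (s ∩ J) hsJ Set.inter_subset_right).2
      _ = ∫⁻ x in s ∩ J, w x ∂volume := by rw [← hwd, withDensity_apply _ hsJ]
  have haeJ : ∀ᵐ x ∂(volume : Measure ℝ), x ∈ J →
      ENNReal.ofReal (g t - δ) ≤ w x ∧ w x ≤ ENNReal.ofReal (g t + δ) :=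
    (ae_restrict_iff' hJmeas).mp (hlow.and hup)
  have haeW : ∀ᵐ x ∂(volume : Measure ℝ), x ∈ J →
      g t - δ ≤ (w x).toReal ∧ (w x).toReal ≤ g t + δ := by
    filter_upwards [haeJ, hwfin] with x hx hfin hxJ
    obtain ⟨h1, h2⟩ := hx hxJ
    constructor
    · have h3 := ENNReal.toReal_mono hfin.ne h1
      rw [ENNReal.toReal_ofReal'] at h3
      exact le_trans (le_max_left _ _) h3
    · have h3 := ENNReal.toReal_mono ENNReal.ofReal_ne_top h2
      rwa [ENNReal.toReal_ofReal hgt_up] at h3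
  -- the rescaled kernel
  set φ : ℝ → ℝ → ℝ := fun b x => (1 / b) * K ((t - x) / b) with hφdef
  have hφmeas : ∀ b, Measurable (φ b) := fun b =>
    (hKmeas.comp ((measurable_const.sub measurable_id).div_const b)).const_mul _
  have hφsupp : ∀ b, 0 < b → ∀ x, x ∉ Icc (t - b) (t + b) → φ b x = 0 := by
    intro b hb x hx
    have hmem : (t - x) / b ∉ Icc (-1 : ℝ) 1 := by
      intro hmem
      rw [Set.mem_Icc] at hmem
      apply hx
      rw [Set.mem_Icc]
      have h1 : t - x ≤ b := by
        have := (div_le_one hb).mp hmem.2; linarith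
      have h2 : -b ≤ t - x := by
        have := (le_div_iff₀ hb).mp hmem.1; linarith
      exact ⟨by linarith, by linarith⟩
    show (1 / b) * K ((t - x) / b) = 0
    rw [hKsupp _ hmem, mul_zero]
  have hφbdd : ∀ b, 0 < b → ∀ x, |φ b x| ≤ M / b := by
    intro b hb x
    have hb' : (0 : ℝ) < 1 / b := by positivity
    calc |φ b x| = (1 / b) * |K ((t - x) / b)| := by
          show |(1 / b) * K ((t - x) / b)| = _
          rw [abs_mul, abs_of_pos hb']
      _ ≤ (1 / b) * M := by
          have := hM ((t - x) / b)
          nlinarith [abs_nonneg (K ((t - x) / b))]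
      _ = M / b := by ring
  have hφint : ∀ b, 0 < b → Integrable (φ b) := by
    intro b hb
    refine Integrable.mono' (hindint (M / b) (t - b) (t + b))
      (hφmeas b).aestronglyMeasurable (ae_of_all _ fun x => ?_)
    rw [Real.norm_eq_abs]
    by_cases hx : x ∈ Icc (t - b) (t + b)
    · rw [Set.indicator_of_mem hx]; exact hφbdd b hb x
    · rw [hφsupp b hb x hx, Set.indicator_of_notMem hx]; simp
  have hcomp : ∀ (f : ℝ → ℝ) (b : ℝ), 0 < b → ∫ x, f ((t - x) / b) = b * ∫ u, f u := by
    intro f b hb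
    have h1 : (∫ x, f ((t - x) / b)) = ∫ x, (fun y => f (y / b)) (t - x) := rfl
    rw [h1, integral_sub_left_eq_self (fun y => f (y / b)) volume t,
      MeasureTheory.Measure.integral_comp_div (fun y => f y) b, abs_of_pos hb, smul_eq_mul]
  have hφ1 : ∀ b, 0 < b → ∫ x, φ b x = 1 := by
    intro b hb
    show ∫ x, (1 / b) * K ((t - x) / b) = 1
    rw [MeasureTheory.integral_const_mul, hcomp K b hb, hK1]
    field_simp
  have hφabs : ∀ b, 0 < b → ∫ x, |φ b x| = I := by
    intro b hb
    have hb' : (0 : ℝ) < 1 / b := by positivity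
    have heq : ∀ x, |φ b x| = (1 / b) * |K ((t - x) / b)| := by
      intro x
      show |(1 / b) * K ((t - x) / b)| = _
      rw [abs_mul, abs_of_pos hb']
    simp_rw [heq]
    rw [MeasureTheory.integral_const_mul, hcomp (fun u => |K u|) b hb, ← hIdef]
    field_simp
  have hsubJ : ∀ b, 0 < b → b < r → Icc (t - b) (t + b) ⊆ J := by
    intro b hb hbr x hx
    rw [Set.mem_Icc] at hx
    exact ⟨by linarith [hx.1], by linarith [hx.2]⟩
  have hνint : ∀ f : ℝ → ℝ, ∫ x, f x ∂ν = ∫ x, (w x).toReal * f x ∂volume := by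
    intro f
    rw [← hwd', integral_withDensity_eq_integral_smul hwmeas.ennreal_toNNReal]
    simp_rw [NNReal.smul_def, smul_eq_mul]
    rfl
  have hWφint : ∀ b, 0 < b → b < r → Integrable (fun x => (w x).toReal * φ b x) := by
    intro b hb hbr
    refine Integrable.mono' ((hφint b hb).abs.const_mul (g t + δ))
      ((hwmeas.ennreal_toReal.mul (hφmeas b)).aestronglyMeasurable) ?_
    filter_upwards [haeW] with x hx
    rw [Real.norm_eq_abs, abs_mul, abs_of_nonneg ENNReal.toReal_nonneg]
    by_cases hxI : x ∈ Icc (t - b) (t + b)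
    · exact mul_le_mul_of_nonneg_right (hx (hsubJ b hb hbr hxI)).2 (abs_nonneg _)
    · rw [hφsupp b hb x hxI]; simp
  have hmean : ∀ b, 0 < b → b < r → |(∫ x, φ b x ∂ν) - g t| ≤ δ * I := by
    intro b hb hbr
    have hdiff : (∫ x, φ b x ∂ν) - g t = ∫ x, ((w x).toReal - g t) * φ b x := by
      rw [hνint (φ b)]
      have h2 : (∫ x, ((w x).toReal - g t) * φ b x)
          = ∫ x, ((w x).toReal * φ b x - g t * φ b x) := by
        congr 1; funext x; ring
      rw [h2, integral_sub (hWφint b hb hbr) ((hφint b hb).const_mul (g t)),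
        MeasureTheory.integral_const_mul, hφ1 b hb, mul_one]
    rw [hdiff]
    calc |∫ x, ((w x).toReal - g t) * φ b x|
        ≤ ∫ x, |((w x).toReal - g t) * φ b x| := by
          simpa only [Real.norm_eq_abs] using
            norm_integral_le_integral_norm (μ := volume) (fun x => ((w x).toReal - g t) * φ b x)
      _ ≤ ∫ x, δ * |φ b x| := by
          refine integral_mono_of_nonneg (ae_of_all _ fun x => abs_nonneg _)
            ((hφint b hb).abs.const_mul δ) ?_
          filter_upwards [haeW] with x hx
          by_cases hxI : x ∈ Icc (t - b) (t + b)
          · rw [abs_mul]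
            refine mul_le_mul_of_nonneg_right ?_ (abs_nonneg _)
            have h3 := hx (hsubJ b hb hbr hxI)
            rw [abs_le]
            exact ⟨by linarith [h3.1], by linarith [h3.2]⟩
          · rw [hφsupp b hb x hxI]; simp
      _ = δ * I := by rw [MeasureTheory.integral_const_mul, hφabs b hb]
  have hsqb : ∀ b, 0 < b → b < r → ∫ x, (φ b x) ^ 2 ∂ν ≤ (g t + δ) * ((M / b) * I) := by
    intro b hb hbr
    rw [hνint (fun x => (φ b x) ^ 2)]
    calc ∫ x, (w x).toReal * (φ b x) ^ 2
        ≤ ∫ x, (g t + δ) * ((M / b) * |φ b x|) := by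
          refine integral_mono_of_nonneg (ae_of_all _ fun x => by positivity)
            (((hφint b hb).abs.const_mul (M / b)).const_mul (g t + δ)) ?_
          filter_upwards [haeW] with x hx
          by_cases hxI : x ∈ Icc (t - b) (t + b)
          · have h3 := hx (hsubJ b hb hbr hxI)
            have h4 : (φ b x) ^ 2 ≤ (M / b) * |φ b x| := by
              have h5 : (φ b x) ^ 2 = |φ b x| * |φ b x| := by
                rw [abs_mul_abs_self]; ring
              rw [h5]
              exact mul_le_mul_of_nonneg_right (hφbdd b hb x) (abs_nonneg _)
            exact mul_le_mul h3.2 h4 (by positivity) hgt_up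
          · rw [hφsupp b hb x hxI]; simp
      _ = (g t + δ) * ((M / b) * I) := by
          rw [MeasureTheory.integral_const_mul, MeasureTheory.integral_const_mul, hφabs b hb]
  set C : ℝ := (g t + δ) * (M * I) with hCdef
  have hC0 : 0 ≤ C := mul_nonneg hgt_up (by positivity)
  -- the eventual bound
  have hbound : ∀ᶠ n : ℕ in atTop,
      (μ {ω | ε ≤ |(n : ℝ)⁻¹ * ∑ i ∈ Finset.range n,
          (1 / h n) * K ((t - X i ω) / h n) - g t|}).toReal
        ≤ (4 * C / ε ^ 2) / ((n : ℝ) * h n) := by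
    filter_upwards [eventually_ge_atTop 1, hh0.eventually_lt_const hr0] with n hn1 hnr
    have hb : 0 < h n := hhpos n
    have hbr : h n < r := hnr
    have hn0 : (0 : ℝ) < (n : ℝ) := by exact_mod_cast hn1
    set b : ℝ := h n with hbdef
    set Y : ℕ → Ω → ℝ := fun i ω => (1 / b) * K ((t - X i ω) / b) with hYdef
    have hYφ : ∀ i, Y i = φ b ∘ X i := fun i => rfl
    have hYmeas : ∀ i, Measurable (Y i) := fun i => (hφmeas b).comp (hXmeas i)
    have hYmem : ∀ i, MemLp (Y i) 2 μ := by
      intro i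
      refine MemLp.of_bound (hYmeas i).aestronglyMeasurable (M / b) (ae_of_all _ fun ω => ?_)
      rw [Real.norm_eq_abs]
      exact hφbdd b hb (X i ω)
    have hYint : ∀ i, Integrable (Y i) μ := fun i => (hYmem i).integrable one_le_two
    have hYindep : iIndepFun Y μ :=
      hXindep.comp (fun _ => φ b) fun _ => hφmeas b
    set m : ℝ := ∫ x, φ b x ∂ν with hmdef
    have hYexp : ∀ i, ∫ ω, Y i ω ∂μ = m := by
      intro i
      rw [hmdef, ← hXdist i,
        integral_map (hXmeas i).aemeasurable (hφmeas b).aestronglyMeasurable]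
    have hYsq : ∀ i, ∫ ω, Y i ω ^ 2 ∂μ = ∫ x, φ b x ^ 2 ∂ν := by
      intro i
      rw [← hXdist i,
        integral_map (hXmeas i).aemeasurable ((hφmeas b).pow_const 2).aestronglyMeasurable]
    set Z : Ω → ℝ := fun ω => (n : ℝ)⁻¹ * ∑ i ∈ Finset.range n, Y i ω with hZdef
    have hZeq : Z = (n : ℝ)⁻¹ • ∑ i ∈ Finset.range n, Y i := by
      funext ω
      simp [hZdef, Finset.sum_apply]
    have hZmem : MemLp Z 2 μ := by
      rw [hZeq]
      exact (memLp_finsetSum' _ fun i _ => hYmem i).const_smul _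
    have hZmean : ∫ ω, Z ω ∂μ = m := by
      show ∫ ω, (n : ℝ)⁻¹ * ∑ i ∈ Finset.range n, Y i ω ∂μ = m
      rw [MeasureTheory.integral_const_mul, integral_finset_sum _ fun i _ => hYint i]
      simp only [hYexp, Finset.sum_const, Finset.card_range, nsmul_eq_mul]
      field_simp
    have hvar : variance Z μ ≤ C / ((n : ℝ) * b) := by
      have h1 : variance Z μ = ((n : ℝ)⁻¹) ^ 2 * variance (∑ i ∈ Finset.range n, Y i) μ := by
        rw [hZeq, variance_smul]
      have h2 : variance (∑ i ∈ Finset.range n, Y i) μ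
          = ∑ i ∈ Finset.range n, variance (Y i) μ :=
        IndepFun.variance_sum (fun i _ => hYmem i) fun i _ j _ hij => hYindep.indepFun hij
      have h3 : ∀ i, variance (Y i) μ ≤ (g t + δ) * ((M / b) * I) := by
        intro i
        refine le_trans (variance_le_expectation_sq (hYmeas i).aestronglyMeasurable) ?_
        have h4 : μ[(Y i) ^ 2] = ∫ ω, Y i ω ^ 2 ∂μ := by
          congr 1
        rw [h4, hYsq i]
        exact hsqb b hb hbr
      calc variance Z μ = ((n : ℝ)⁻¹) ^ 2 * ∑ i ∈ Finset.range n, variance (Y i) μ := by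
            rw [h1, h2]
        _ ≤ ((n : ℝ)⁻¹) ^ 2 * ((n : ℝ) * ((g t + δ) * ((M / b) * I))) := by
            refine mul_le_mul_of_nonneg_left ?_ (by positivity)
            calc ∑ i ∈ Finset.range n, variance (Y i) μ
                ≤ ∑ _i ∈ Finset.range n, (g t + δ) * ((M / b) * I) :=
                  Finset.sum_le_sum fun i _ => h3 i
              _ = (n : ℝ) * ((g t + δ) * ((M / b) * I)) := by
                  rw [Finset.sum_const, Finset.card_range, nsmul_eq_mul]
        _ = C / ((n : ℝ) * b) := by
            rw [hCdef]
            field_simp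
    have hm2 : |m - g t| ≤ ε / 2 := le_trans (hmean b hb hbr) hδI
    have hsetsub : {ω | ε ≤ |Z ω - g t|} ⊆ {ω | ε / 2 ≤ |Z ω - ∫ ω', Z ω' ∂μ|} := by
      intro ω hω
      simp only [Set.mem_setOf_eq] at hω ⊢
      rw [hZmean]
      have h4 : |Z ω - g t| ≤ |Z ω - m| + |m - g t| := abs_sub_le _ _ _
      linarith
    have hcheb : μ {ω | ε / 2 ≤ |Z ω - ∫ ω', Z ω' ∂μ|}
        ≤ ENNReal.ofReal (variance Z μ / (ε / 2) ^ 2) :=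
      meas_ge_le_variance_div_sq hZmem (by positivity)
    have hAeq : {ω | ε ≤ |(n : ℝ)⁻¹ * ∑ i ∈ Finset.range n,
        (1 / h n) * K ((t - X i ω) / h n) - g t|} = {ω | ε ≤ |Z ω - g t|} := rfl
    rw [hAeq]
    have h5 : (μ {ω | ε ≤ |Z ω - g t|}).toReal ≤ variance Z μ / (ε / 2) ^ 2 := by
      refine ENNReal.toReal_le_of_le_ofReal
        (div_nonneg (variance_nonneg _ _) (by positivity)) ?_
      exact le_trans (measure_mono hsetsub) hcheb
    refine le_trans h5 ?_
    have h6 : variance Z μ / (ε / 2) ^ 2 ≤ (C / ((n : ℝ) * b)) / (ε / 2) ^ 2 := by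
      gcongr
    refine le_trans h6 (le_of_eq ?_)
    have hnb : (0 : ℝ) < (n : ℝ) * b := by positivity
    field_simp
    ring
  have hB : Tendsto (fun n : ℕ => (4 * C / ε ^ 2) / ((n : ℝ) * h n)) atTop (nhds 0) :=
    Tendsto.div_atTop tendsto_const_nhds hnh
  exact tendsto_of_tendsto_of_tendsto_of_le_of_le' tendsto_const_nhds hB
    (Eventually.of_forall fun n => ENNReal.toReal_nonneg) hbound
end

section
/- Under the same setup, (h_n/n) Σ_{i=1}^n K_{h_n}(t - X_i)² → g(t) ∫ K(u)² du in probability. -/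
open MeasureTheory ProbabilityTheory Set Filter Finset


/-- Upper bound for the integral against a measure with (possibly non-measurable) density. -/
lemma ksc_upper (ν : Measure ℝ) (g : ℝ → ℝ)
    (hν : ∀ A : Set ℝ, MeasurableSet A → ν A = ∫⁻ x in A, ENNReal.ofReal (g x))
    (s : Set ℝ) (hs : MeasurableSet s) (c : ℝ) (hc : 0 ≤ c)
    (hup : ∀ x ∈ s, g x ≤ c)
    (φ : ℝ → ℝ) (hφm : Measurable φ) (hφ0 : ∀ x, 0 ≤ φ x)
    (hφs : ∀ x ∉ s, φ x = 0) (hφi : Integrable φ volume) :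
    ∫ x, φ x ∂ν ≤ c * ∫ x, φ x := by
  have hle : ν.restrict s ≤ (ENNReal.ofReal c) • (volume.restrict s) := by
    rw [Measure.le_iff]
    intro A hA
    rw [Measure.restrict_apply hA, Measure.smul_apply, Measure.restrict_apply hA,
      hν _ (hA.inter hs), smul_eq_mul]
    calc ∫⁻ x in A ∩ s, ENNReal.ofReal (g x) ≤ ∫⁻ _x in A ∩ s, ENNReal.ofReal c := by
          refine lintegral_mono_ae (((ae_restrict_mem (hA.inter hs)).mono
            (fun x hx => ENNReal.ofReal_le_ofReal (hup x hx.2))))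
      _ = ENNReal.ofReal c * volume (A ∩ s) := setLIntegral_const _ _
  calc ∫ x, φ x ∂ν = ∫ x in s, φ x ∂ν :=
        (setIntegral_eq_integral_of_forall_compl_eq_zero hφs).symm
    _ ≤ ∫ x, φ x ∂((ENNReal.ofReal c) • volume.restrict s) := by
        refine integral_mono_measure hle (ae_of_all _ hφ0) ?_
        exact (hφi.restrict).smul_measure ENNReal.ofReal_ne_top
    _ = c * ∫ x in s, φ x := by
        rw [integral_smul_measure, ENNReal.toReal_ofReal hc, smul_eq_mul]
    _ = c * ∫ x, φ x := by
        rw [setIntegral_eq_integral_of_forall_compl_eq_zero hφs]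

/-- Lower bound for the integral against a measure with (possibly non-measurable) density. -/
lemma ksc_lower (ν : Measure ℝ) [IsFiniteMeasure ν] (g : ℝ → ℝ)
    (hν : ∀ A : Set ℝ, MeasurableSet A → ν A = ∫⁻ x in A, ENNReal.ofReal (g x))
    (s : Set ℝ) (hs : MeasurableSet s) (c : ℝ) (hc : 0 ≤ c)
    (hlo : ∀ x ∈ s, c ≤ g x)
    (φ : ℝ → ℝ) (hφm : Measurable φ) (hφ0 : ∀ x, 0 ≤ φ x)
    (hφs : ∀ x ∉ s, φ x = 0) (M : ℝ) (hφM : ∀ x, |φ x| ≤ M) :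
    c * ∫ x, φ x ≤ ∫ x, φ x ∂ν := by
  have hle : (ENNReal.ofReal c) • (volume.restrict s) ≤ ν.restrict s := by
    rw [Measure.le_iff]
    intro A hA
    rw [Measure.restrict_apply hA, Measure.smul_apply, Measure.restrict_apply hA,
      hν _ (hA.inter hs), smul_eq_mul]
    calc ENNReal.ofReal c * volume (A ∩ s) = ∫⁻ _x in A ∩ s, ENNReal.ofReal c :=
          (setLIntegral_const _ _).symm
      _ ≤ ∫⁻ x in A ∩ s, ENNReal.ofReal (g x) := by
          refine lintegral_mono_ae (((ae_restrict_mem (hA.inter hs)).mono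
            (fun x hx => ENNReal.ofReal_le_ofReal (hlo x hx.2))))
  have hint : Integrable φ (ν.restrict s) := by
    refine memLp_one_iff_integrable.mp ?_
    exact MemLp.of_bound hφm.aestronglyMeasurable M (ae_of_all _ (fun x => hφM x))
  calc c * ∫ x, φ x = c * ∫ x in s, φ x := by
        rw [setIntegral_eq_integral_of_forall_compl_eq_zero hφs]
    _ = ∫ x, φ x ∂((ENNReal.ofReal c) • volume.restrict s) := by
        rw [integral_smul_measure, ENNReal.toReal_ofReal hc, smul_eq_mul]
    _ ≤ ∫ x in s, φ x ∂ν := integral_mono_measure hle (ae_of_all _ hφ0) hint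
    _ = ∫ x, φ x ∂ν := setIntegral_eq_integral_of_forall_compl_eq_zero hφs

/-- Change of variables: `∫ F((t-x)/h) dx = h ∫ F`. -/
lemma ksc_chg (F : ℝ → ℝ) (t : ℝ) {h : ℝ} (hh : 0 < h) :
    ∫ x : ℝ, F ((t - x) / h) = h * ∫ u, F u := by
  have s1 : ∫ x : ℝ, F ((t - x) / h) = ∫ x : ℝ, F ((t + x) / h) := by
    simp_rw [sub_eq_add_neg]
    exact integral_neg_eq_self (fun x : ℝ => F ((t + x) / h)) volume
  have s2 : ∫ x : ℝ, F ((t + x) / h) = ∫ x : ℝ, F (x / h) :=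
    integral_add_left_eq_self t (f := fun x : ℝ => F (x / h))
  rw [s1, s2, Measure.integral_comp_div F h, abs_of_pos hh, smul_eq_mul]

/-- Integrability of a bounded measurable function vanishing outside an interval. -/
lemma ksc_integrable (φ : ℝ → ℝ) (hφm : Measurable φ) (a b M : ℝ)
    (hφs : ∀ x ∉ Icc a b, φ x = 0) (hφM : ∀ x, |φ x| ≤ M) :
    Integrable φ volume := by
  haveI : IsFiniteMeasure (volume.restrict (Icc a b)) := by
    constructor
    rw [Measure.restrict_apply_univ]
    exact measure_Icc_lt_top
  have h1 : IntegrableOn φ (Icc a b) volume := by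
    refine memLp_one_iff_integrable.mp ?_
    exact MemLp.of_bound hφm.aestronglyMeasurable M (ae_of_all _ (fun x => hφM x))
  exact h1.integrable_of_forall_notMem_eq_zero hφs

lemma ksc_conv (ν : Measure ℝ) [IsProbabilityMeasure ν] (g : ℝ → ℝ) (hgpos : ∀ x, 0 ≤ g x)
    (hν : ∀ A : Set ℝ, MeasurableSet A → ν A = ∫⁻ x in A, ENNReal.ofReal (g x))
    (t : ℝ) (hgc : ContinuousAt g t)
    (h : ℕ → ℝ) (hhpos : ∀ n, 0 < h n) (hh0 : Tendsto h atTop (nhds 0))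
    (F : ℝ → ℝ) (hFm : Measurable F) (hF0 : ∀ u, 0 ≤ F u)
    (hFs : ∀ u, u ∉ Icc (-1 : ℝ) 1 → F u = 0)
    (M : ℝ) (hFM : ∀ u, |F u| ≤ M) :
    Tendsto (fun n => (∫ x, F ((t - x) / h n) ∂ν) / h n) atTop
      (nhds (g t * ∫ u, F u)) := by
  rw [Metric.tendsto_nhds]
  intro ε hε
  set cF := ∫ u, F u with hcF
  have hcF0 : 0 ≤ cF := integral_nonneg hF0
  set ε' := ε / (cF + 1) with hε'def
  have hε' : 0 < ε' := div_pos hε (by linarith)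
  have hεeq : ε' * (cF + 1) = ε := div_mul_cancel₀ ε (by linarith)
  obtain ⟨δ, hδ0, hδ⟩ := Metric.continuousAt_iff.mp hgc ε' hε'
  have hev : ∀ᶠ n in atTop, h n < δ := hh0.eventually_lt_const hδ0
  filter_upwards [hev] with n hn
  rw [Real.dist_eq]
  have hp := hhpos n
  set φ : ℝ → ℝ := fun x => F ((t - x) / h n) with hφdef
  have hφm : Measurable φ := hFm.comp ((measurable_const.sub measurable_id).div_const _)
  have hφ0 : ∀ x, 0 ≤ φ x := fun x => hF0 _
  have hφM : ∀ x, |φ x| ≤ M := fun x => hFM _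
  have hsupp : ∀ x ∉ Icc (t - h n) (t + h n), φ x = 0 := by
    intro x hx
    apply hFs
    intro hmem
    apply hx
    rcases hmem with ⟨h1, h2⟩
    have h1' := (le_div_iff₀ hp).mp h1
    have h2' := (div_le_one hp).mp h2
    constructor <;> linarith
  have hφi : Integrable φ volume := ksc_integrable φ hφm _ _ M hsupp hφM
  set s : Set ℝ := Ioo (t - δ) (t + δ) with hsdef
  have hs : MeasurableSet s := measurableSet_Ioo
  have hss : ∀ x ∉ s, φ x = 0 := by
    intro x hx
    apply hsupp
    intro hmem
    apply hx
    rcases hmem with ⟨h1, h2⟩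
    exact ⟨by linarith, by linarith⟩
  have hgs : ∀ x ∈ s, |g x - g t| < ε' := by
    intro x hx
    have : dist x t < δ := by
      rw [Real.dist_eq, abs_lt]
      rcases hx with ⟨h1, h2⟩
      constructor <;> linarith
    simpa [Real.dist_eq] using hδ this
  have hup : ∀ x ∈ s, g x ≤ g t + ε' := by
    intro x hx
    have := abs_lt.mp (hgs x hx)
    linarith [this.2]
  set m : ℝ := max (g t - ε') 0 with hmdef
  have hm1 : g t - ε' ≤ m := le_max_left _ _
  have hm0 : 0 ≤ m := le_max_right _ _
  have hlo : ∀ x ∈ s, m ≤ g x := by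
    intro x hx
    have := abs_lt.mp (hgs x hx)
    apply max_le
    · linarith [this.1]
    · exact hgpos x
  have chg : ∫ x, φ x = h n * cF := ksc_chg F t hp
  have up : ∫ x, φ x ∂ν ≤ (g t + ε') * (h n * cF) := by
    have := ksc_upper ν g hν s hs (g t + ε') (by linarith [hgpos t]) hup φ hφm hφ0 hss hφi
    rwa [chg] at this
  have lo : m * (h n * cF) ≤ ∫ x, φ x ∂ν := by
    have := ksc_lower ν g hν s hs m hm0 hlo φ hφm hφ0 hss M hφM
    rwa [chg] at this
  set I := ∫ x, φ x ∂ν with hIdef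
  have hIle : I / h n ≤ (g t + ε') * cF := by
    rw [div_le_iff₀ hp]
    calc I ≤ (g t + ε') * (h n * cF) := up
      _ = (g t + ε') * cF * h n := by ring
  have hIge : m * cF ≤ I / h n := by
    rw [le_div_iff₀ hp]
    calc m * cF * h n = m * (h n * cF) := by ring
      _ ≤ I := lo
  rw [abs_lt]
  constructor
  · nlinarith [hIge, hεeq, hε', hcF0, hm1]
  · nlinarith [hIle, hεeq, hε', hcF0]

/-- Under the same setup as Statement 7 (`Xᵢ` i.i.d. with density `g` on
`[0,1]`, `g` continuous at `t`, `K` bounded with support `[-1,1]`, `∫ K = 1`, `hₙ → 0`,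
`n hₙ → ∞`), one has `(hₙ/n) Σ_{i<n} K_{hₙ}(t - Xᵢ)² → g(t) ∫ K(u)² du` in probability. -/
theorem kernel_squared_consistency
    {Ω : Type*} [MeasurableSpace Ω] (μ : Measure Ω) [IsProbabilityMeasure μ]
    (X : ℕ → Ω → ℝ) (hXmeas : ∀ i, Measurable (X i))
    (hXindep : iIndepFun X μ)
    (g : ℝ → ℝ) (hgpos : ∀ x, 0 ≤ g x) (hgsupp : ∀ x, x ∉ Icc (0 : ℝ) 1 → g x = 0)
    (hXdist : ∀ i, μ.map (X i) = volume.withDensity (fun x => ENNReal.ofReal (g x)))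
    (t : ℝ) (ht : t ∈ Ioo (0 : ℝ) 1) (hgc : ContinuousAt g t)
    (K : ℝ → ℝ) (hKbdd : ∃ M, ∀ u, |K u| ≤ M)
    (hKmeas : Measurable K)
    (hKsupp : ∀ u, u ∉ Icc (-1 : ℝ) 1 → K u = 0) (hK1 : ∫ u, K u = 1)
    (h : ℕ → ℝ) (hhpos : ∀ n, 0 < h n)
    (hh0 : Tendsto h atTop (nhds 0))
    (hnh : Tendsto (fun n : ℕ => (n : ℝ) * h n) atTop atTop) :
    ∀ ε > 0,
      Tendsto
        (fun n : ℕ =>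
          (μ {ω | ε ≤ |h n / (n : ℝ) * ∑ i ∈ Finset.range n,
              ((1 / h n) * K ((t - X i ω) / h n)) ^ 2
              - g t * ∫ u, (K u) ^ 2|}).toReal)
        atTop (nhds 0) := by
  intro ε hε
  obtain ⟨M, hM⟩ := hKbdd
  have hM0 : 0 ≤ M := le_trans (abs_nonneg _) (hM 0)
  set ν : Measure ℝ := μ.map (X 0) with hνdef
  haveI : IsProbabilityMeasure ν := Measure.isProbabilityMeasure_map (hXmeas 0).aemeasurable
  have hνA : ∀ A : Set ℝ, MeasurableSet A → ν A = ∫⁻ x in A, ENNReal.ofReal (g x) := by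
    intro A hA
    rw [hνdef, hXdist 0, withDensity_apply _ hA]
  -- properties of K^2 and K^4
  have hF2m : Measurable (fun u => K u ^ 2) := hKmeas.pow_const 2
  have hF4m : Measurable (fun u => K u ^ 4) := hKmeas.pow_const 4
  have hF20 : ∀ u, 0 ≤ K u ^ 2 := fun u => sq_nonneg _
  have hF40 : ∀ u, 0 ≤ K u ^ 4 := fun u => by positivity
  have hF2s : ∀ u, u ∉ Icc (-1 : ℝ) 1 → K u ^ 2 = 0 := fun u hu => by
    rw [hKsupp u hu]; norm_num
  have hF4s : ∀ u, u ∉ Icc (-1 : ℝ) 1 → K u ^ 4 = 0 := fun u hu => by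
    rw [hKsupp u hu]; norm_num
  have hF2M : ∀ u, |K u ^ 2| ≤ M ^ 2 := fun u => by
    rw [abs_pow]; exact pow_le_pow_left₀ (abs_nonneg _) (hM u) 2
  have hF4M : ∀ u, |K u ^ 4| ≤ M ^ 4 := fun u => by
    rw [abs_pow]; exact pow_le_pow_left₀ (abs_nonneg _) (hM u) 4
  -- the two convergence facts
  have conv2 := ksc_conv ν g hgpos hνA t hgc h hhpos hh0 (fun u => K u ^ 2)
    hF2m hF20 hF2s (M ^ 2) hF2M
  have conv4 := ksc_conv ν g hgpos hνA t hgc h hhpos hh0 (fun u => K u ^ 4)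
    hF4m hF40 hF4s (M ^ 4) hF4M
  set L : ℝ := g t * ∫ u, K u ^ 2 with hLdef
  set C4 : ℝ := g t * (∫ u, K u ^ 4) + 1 with hC4def
  have hVb : ∀ᶠ n in atTop, (∫ x, (fun u => K u ^ 4) ((t - x) / h n) ∂ν) / h n ≤ C4 := by
    filter_upwards [conv4.eventually_lt_const (show g t * ∫ u, K u ^ 4 < C4 by
      rw [hC4def]; linarith)] with n hn using hn.le
  have hd2 : ∀ᶠ n in atTop, dist ((∫ x, (fun u => K u ^ 2) ((t - x) / h n) ∂ν) / h n) L < ε / 2 :=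
    Metric.tendsto_nhds.mp conv2 _ (half_pos hε)
  refine squeeze_zero' (g := fun n : ℕ => C4 / ((n : ℝ) * h n) / (ε / 2) ^ 2)
    (Eventually.of_forall (fun n => ENNReal.toReal_nonneg)) ?_ ?_
  · -- eventual bound
    filter_upwards [hd2, hVb, eventually_ge_atTop 1] with n h1 h2 hn1
    have hp : 0 < h n := hhpos n
    have hn0 : (0 : ℝ) < n := by exact_mod_cast Nat.lt_of_lt_of_le Nat.zero_lt_one hn1
    have hnh0 : 0 < (n : ℝ) * h n := mul_pos hn0 hp
    set T : Ω → ℝ := fun ω => h n / (n : ℝ) * ∑ i ∈ Finset.range n,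
      ((1 / h n) * K ((t - X i ω) / h n)) ^ 2 with hTdef
    have hφ2m : Measurable (fun x : ℝ => K ((t - x) / h n) ^ 2) :=
      hF2m.comp ((measurable_const.sub measurable_id).div_const _)
    have hφ4m : Measurable (fun x : ℝ => K ((t - x) / h n) ^ 4) :=
      hF4m.comp ((measurable_const.sub measurable_id).div_const _)
    set Z : ℕ → Ω → ℝ := fun i => (fun x : ℝ => K ((t - x) / h n) ^ 2) ∘ (X i) with hZdef
    have hZm : ∀ i, Measurable (Z i) := fun i => hφ2m.comp (hXmeas i)
    have hZb : ∀ i ω, |Z i ω| ≤ M ^ 2 := fun i ω => hF2M _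
    have hZ2 : ∀ i, MemLp (Z i) 2 μ := fun i =>
      MemLp.of_bound (hZm i).aestronglyMeasurable _ (ae_of_all _ (hZb i))
    have hZint : ∀ i, Integrable (Z i) μ := fun i =>
      memLp_one_iff_integrable.mp
        (MemLp.of_bound (hZm i).aestronglyMeasurable _ (ae_of_all _ (hZb i)))
    have hTeq : T = (((n : ℝ) * h n)⁻¹) • (fun ω => ∑ i ∈ Finset.range n, Z i ω) := by
      funext ω
      simp only [hTdef, Pi.smul_apply, smul_eq_mul]
      rw [Finset.mul_sum, Finset.mul_sum]
      refine Finset.sum_congr rfl (fun i _ => ?_)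
      have hzi : Z i ω = K ((t - X i ω) / h n) ^ 2 := rfl
      rw [hzi]
      field_simp
    have hTm : Measurable T := by
      rw [hTeq]
      exact (Finset.measurable_sum _ (fun i _ => hZm i)).const_smul _
    have hTb : ∀ ω, |T ω| ≤ ((n : ℝ) * h n)⁻¹ * ((n : ℝ) * M ^ 2) := by
      intro ω
      rw [hTeq]
      simp only [Pi.smul_apply, smul_eq_mul]
      rw [abs_mul, abs_of_nonneg (inv_nonneg.mpr hnh0.le)]
      refine mul_le_mul_of_nonneg_left ?_ (inv_nonneg.mpr hnh0.le)
      calc |∑ i ∈ Finset.range n, Z i ω| ≤ ∑ i ∈ Finset.range n, |Z i ω| :=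
            Finset.abs_sum_le_sum_abs _ _
        _ ≤ ∑ _i ∈ Finset.range n, M ^ 2 := Finset.sum_le_sum (fun i _ => hZb i ω)
        _ = (n : ℝ) * M ^ 2 := by
            rw [Finset.sum_const, Finset.card_range, nsmul_eq_mul]
    have hT2 : MemLp T 2 μ :=
      MemLp.of_bound hTm.aestronglyMeasurable _ (ae_of_all _ hTb)
    have hmap : ∀ i, μ.map (X i) = ν := fun i => by rw [hνdef, hXdist i, hXdist 0]
    have hEZ : ∀ i, ∫ ω, Z i ω ∂μ = ∫ x, K ((t - x) / h n) ^ 2 ∂ν := by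
      intro i
      rw [← hmap i, integral_map (hXmeas i).aemeasurable hφ2m.aestronglyMeasurable]
      rfl
    have hET : ∫ ω, T ω ∂μ = (∫ x, K ((t - x) / h n) ^ 2 ∂ν) / h n := by
      rw [hTeq]
      simp only [Pi.smul_apply]
      rw [integral_smul, integral_finset_sum _ (fun i _ => hZint i)]
      have hsc : ∑ i ∈ Finset.range n, ∫ ω, Z i ω ∂μ
          = (n : ℝ) * ∫ x, K ((t - x) / h n) ^ 2 ∂ν := by
        rw [Finset.sum_congr rfl (fun i _ => hEZ i), Finset.sum_const, Finset.card_range,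
          nsmul_eq_mul]
      rw [hsc, smul_eq_mul]
      field_simp
    have hVZ : ∀ i, variance (Z i) μ ≤ ∫ x, K ((t - x) / h n) ^ 4 ∂ν := by
      intro i
      have h1' := variance_le_expectation_sq (μ := μ) (X := Z i) (hZm i).aestronglyMeasurable
      have h2' : ∫ ω, ((Z i) ^ 2) ω ∂μ = ∫ x, K ((t - x) / h n) ^ 4 ∂ν := by
        have : ∫ ω, ((Z i) ^ 2) ω ∂μ = ∫ ω, (fun x : ℝ => K ((t - x) / h n) ^ 4) (X i ω) ∂μ := by
          refine integral_congr_ae (ae_of_all _ (fun ω => ?_))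
          simp only [Pi.pow_apply]
          have hzi : Z i ω = K ((t - X i ω) / h n) ^ 2 := rfl
          rw [hzi]
          ring
        rw [this, ← integral_map (hXmeas i).aemeasurable hφ4m.aestronglyMeasurable, hmap i]
      linarith [h2' ▸ h1']
    have hpair : (↑(Finset.range n) : Set ℕ).Pairwise
        (fun i j => IndepFun (Z i) (Z j) μ) := by
      intro i _ j _ hij
      exact (hXindep.indepFun hij).comp hφ2m hφ2m
    have hVar : variance T μ ≤ ((∫ x, K ((t - x) / h n) ^ 4 ∂ν) / h n) / ((n : ℝ) * h n) := by
      rw [hTeq]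
      have hsum : (fun ω => ∑ i ∈ Finset.range n, Z i ω) = ∑ i ∈ Finset.range n, Z i := by
        funext ω; simp
      rw [hsum, variance_smul, IndepFun.variance_sum (fun i _ => hZ2 i) hpair]
      calc (((n : ℝ) * h n)⁻¹) ^ 2 * ∑ i ∈ Finset.range n, variance (Z i) μ
          ≤ (((n : ℝ) * h n)⁻¹) ^ 2 * ∑ _i ∈ Finset.range n, ∫ x, K ((t - x) / h n) ^ 4 ∂ν :=
            mul_le_mul_of_nonneg_left (Finset.sum_le_sum (fun i _ => hVZ i)) (by positivity)
        _ = (((n : ℝ) * h n)⁻¹) ^ 2 * ((n : ℝ) * ∫ x, K ((t - x) / h n) ^ 4 ∂ν) := by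
            rw [Finset.sum_const, Finset.card_range, nsmul_eq_mul]
        _ = ((∫ x, K ((t - x) / h n) ^ 4 ∂ν) / h n) / ((n : ℝ) * h n) := by
            field_simp
    -- put things together
    show (μ {ω | ε ≤ |T ω - L|}).toReal ≤ C4 / ((n : ℝ) * h n) / (ε / 2) ^ 2
    have hsub : {ω | ε ≤ |T ω - L|} ⊆ {ω | ε / 2 ≤ |T ω - ∫ x, T x ∂μ|} := by
      intro ω hω
      simp only [Set.mem_setOf_eq] at *
      rw [hET]
      have h1' : |(∫ x, K ((t - x) / h n) ^ 2 ∂ν) / h n - L| < ε / 2 := by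
        rw [← Real.dist_eq]; exact h1
      have h3 := abs_sub_abs_le_abs_sub (T ω - L) ((∫ x, K ((t - x) / h n) ^ 2 ∂ν) / h n - L)
      rw [sub_sub_sub_cancel_right] at h3
      linarith
    have cheb := meas_ge_le_variance_div_sq (μ := μ) hT2 (half_pos hε)
    have hv2 : variance T μ ≤ C4 / ((n : ℝ) * h n) := by
      refine le_trans hVar ?_
      gcongr
    calc (μ {ω | ε ≤ |T ω - L|}).toReal
        ≤ (μ {ω | ε / 2 ≤ |T ω - ∫ x, T x ∂μ|}).toReal :=
          ENNReal.toReal_mono (measure_ne_top _ _) (measure_mono hsub)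
      _ ≤ variance T μ / (ε / 2) ^ 2 := by
          have h6 := ENNReal.toReal_mono ENNReal.ofReal_ne_top cheb
          rwa [ENNReal.toReal_ofReal
            (div_nonneg (variance_nonneg _ _) (sq_nonneg _))] at h6
      _ ≤ C4 / ((n : ℝ) * h n) / (ε / 2) ^ 2 := by gcongr
  · -- the bounding sequence tends to 0
    have h1' : Tendsto (fun n : ℕ => C4 / (ε / 2) ^ 2 * ((n : ℝ) * h n)⁻¹) atTop (nhds 0) := by
      simpa using (tendsto_inv_atTop_zero.comp hnh).const_mul (C4 / (ε / 2) ^ 2)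
    refine h1'.congr (fun n => ?_)
    ring
end

section
/- Let ψ : [a,b] → ℝ be Lipschitz with constant L, let f̂ and f₀ be nondecreasing on [a,b], and define ψ̄ on each interval [τᵢ, τᵢ₊₁) between consecutive jump points of the step function f̂ by ψ̄(u) = ψ(τᵢ) if f₀(u) > f̂(τᵢ) for all u in the interval, ψ̄(u) = ψ(s) if f₀(s) = f̂(s) for some s in the interval, and ψ̄(u) = ψ(τᵢ₊₁) if f₀(u) < f̂(τᵢ) for all u in the interval. Then, on each interval where f̂ is constant and f₀ crosses f̂ or stays on one side, |ψ̄(x) − ψ(x)| ≤ L·|x − x*| for a point x* with ψ̄(x) = ψ(x*) and sign consistency, and in particular if additionally f₀ is strictly increasing with derivative bounded below by m > 0 on [a,b], then |ψ̄(x) − ψ(x)| ≤ (L/m)·|f̂(x) − f₀(x)| for all x ∈ [a,b]. -/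
open Set Filter Topology

/-- Let `ψ` be `L`-Lipschitz on `[a,b]`, `f₀` be `C¹` with `f₀' ≥ m > 0`,
and `fhat` a nondecreasing step function with jump points `a = τ₀ < τ₁ < ... < τ_{k+1} = b`,
constant on each interval `[τᵢ, τᵢ₊₁)`. Let `ψ̄` be the piecewise-constant version of `ψ`:
on `[τᵢ, τᵢ₊₁)`, `ψ̄ ≡ ψ(τᵢ)` if `f₀ > fhat` throughout, `ψ̄ ≡ ψ(s)` if `f₀(s) = fhat(s)` for
some `s` in the interval, and `ψ̄ ≡ ψ(τᵢ₊₁)` if `f₀ < fhat` throughout. Then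
`|ψ̄(x) − ψ(x)| ≤ (L/m)|fhat(x) − f₀(x)|` on `[a,b)`. -/
theorem piecewise_constant_psi_bound
    (a b L m : ℝ) (hab : a < b) (hm : 0 < m)
    (ψ f₀ f₀' fhat ψbar : ℝ → ℝ)
    (hψ : ∀ x ∈ Icc a b, ∀ y ∈ Icc a b, |ψ x - ψ y| ≤ L * |x - y|)
    (hf₀ : ∀ x ∈ Icc a b, HasDerivAt f₀ (f₀' x) x)
    (hf₀' : ∀ x ∈ Icc a b, m ≤ f₀' x)
    (hfhatmono : MonotoneOn fhat (Icc a b))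
    (k : ℕ) (τ : Fin (k + 2) → ℝ) (hτmono : StrictMono τ)
    (hτ0 : τ 0 = a) (hτlast : τ (Fin.last (k + 1)) = b)
    (hfhatconst : ∀ i : Fin (k + 1), ∀ x ∈ Ico (τ i.castSucc) (τ i.succ),
        fhat x = fhat (τ i.castSucc))
    (hψbar : ∀ i : Fin (k + 1),
        ((∀ x ∈ Ico (τ i.castSucc) (τ i.succ), fhat (τ i.castSucc) < f₀ x) ∧
          (∀ x ∈ Ico (τ i.castSucc) (τ i.succ), ψbar x = ψ (τ i.castSucc))) ∨
        (∃ s ∈ Ico (τ i.castSucc) (τ i.succ), f₀ s = fhat s ∧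
          (∀ x ∈ Ico (τ i.castSucc) (τ i.succ), ψbar x = ψ s)) ∨
        ((∀ x ∈ Ico (τ i.castSucc) (τ i.succ), f₀ x < fhat (τ i.castSucc)) ∧
          (∀ x ∈ Ico (τ i.castSucc) (τ i.succ), ψbar x = ψ (τ i.succ)))) :
    ∀ x ∈ Ico a b, |ψbar x - ψ x| ≤ L / m * |fhat x - f₀ x| := by
  -- preliminaries
  have hL : 0 ≤ L := by
    have h := hψ a ⟨le_rfl, hab.le⟩ b ⟨hab.le, le_rfl⟩
    nlinarith [abs_nonneg (ψ a - ψ b), abs_of_neg (show a - b < 0 by linarith)]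
  have hτmem : ∀ j : Fin (k + 2), τ j ∈ Icc a b := by
    intro j
    constructor
    · rw [← hτ0]; exact hτmono.monotone (Fin.zero_le j)
    · rw [← hτlast]; exact hτmono.monotone (Fin.le_last j)
  have hgrow : ∀ x ∈ Icc a b, ∀ y ∈ Icc a b, x ≤ y → m * (y - x) ≤ f₀ y - f₀ x := by
    have hcont : ContinuousOn f₀ (Icc a b) := fun x hx =>
      (hf₀ x hx).continuousAt.continuousWithinAt
    have hdiff : DifferentiableOn ℝ f₀ (interior (Icc a b)) := by
      rw [interior_Icc]
      exact fun x hx => ((hf₀ x (Ioo_subset_Icc_self hx)).differentiableAt).differentiableWithinAt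
    apply (convex_Icc a b).mul_sub_le_image_sub_of_le_deriv hcont hdiff
    intro x hx
    rw [interior_Icc] at hx
    rw [(hf₀ x (Ioo_subset_Icc_self hx)).deriv]
    exact hf₀' x (Ioo_subset_Icc_self hx)
  intro x hx
  -- find the interval containing x
  obtain ⟨i, hxl, hxr⟩ : ∃ i : Fin (k + 1), τ i.castSucc ≤ x ∧ x < τ i.succ := by
    set S : Finset (Fin (k + 2)) := Finset.univ.filter fun j => τ j ≤ x with hS
    have hSne : S.Nonempty := ⟨0, by simp [hS, hτ0, hx.1]⟩
    set j := S.max' hSne with hj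
    have hjle : τ j ≤ x := by
      have := S.max'_mem hSne
      simpa [hS] using this
    have hjne : j ≠ Fin.last (k + 1) := by
      intro h
      rw [h, hτlast] at hjle
      exact absurd hx.2 (not_lt.2 hjle)
    have hjlt : (j : ℕ) < k + 1 := by
      rcases lt_or_eq_of_le (Nat.lt_succ_iff.1 j.isLt) with h | h
      · exact h
      · exact absurd (Fin.ext h) hjne
    refine ⟨⟨(j : ℕ), hjlt⟩, ?_, ?_⟩
    · have : (⟨(j : ℕ), hjlt⟩ : Fin (k + 1)).castSucc = j := by
        ext; simp
      rw [this]; exact hjle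
    · by_contra h
      push_neg at h
      have hmem : (⟨(j : ℕ), hjlt⟩ : Fin (k + 1)).succ ∈ S := by
        simp only [hS, Finset.mem_filter, Finset.mem_univ, true_and]
        exact h
      have := S.le_max' _ hmem
      rw [← hj] at this
      have : (j : ℕ) + 1 ≤ (j : ℕ) := this
      omega
  have hxI : x ∈ Ico (τ i.castSucc) (τ i.succ) := ⟨hxl, hxr⟩
  have hxab : x ∈ Icc a b := ⟨hx.1, hx.2.le⟩
  have hτi : τ i.castSucc ∈ Icc a b := hτmem _
  have hτi1 : τ i.succ ∈ Icc a b := hτmem _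
  have hfx : fhat x = fhat (τ i.castSucc) := hfhatconst i x hxI
  rcases hψbar i with ⟨h₁, h₂⟩ | ⟨s, hs, hfs, h₂⟩ | ⟨h₁, h₂⟩
  · -- f₀ > fhat throughout; ψbar x = ψ (τ i.castSucc)
    rw [h₂ x hxI]
    have hb1 : |ψ (τ i.castSucc) - ψ x| ≤ L * (x - τ i.castSucc) := by
      have h' := hψ (τ i.castSucc) hτi x hxab
      have he : |τ i.castSucc - x| = x - τ i.castSucc := by
        rw [abs_sub_comm]; exact abs_of_nonneg (by linarith)
      rwa [he] at h'
    have hb2 : m * (x - τ i.castSucc) ≤ f₀ x - fhat x := by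
      have := hgrow (τ i.castSucc) hτi x hxab hxl
      have hlt := h₁ (τ i.castSucc) ⟨le_rfl, hτmono ((Fin.castSucc_lt_succ : i.castSucc < i.succ))⟩
      rw [hfx]; linarith
    have habs : |fhat x - f₀ x| = f₀ x - fhat x := by
      rw [abs_sub_comm]; exact abs_of_nonneg (by nlinarith)
    rw [habs]
    calc |ψ (τ i.castSucc) - ψ x| ≤ L * (x - τ i.castSucc) := hb1
      _ ≤ L / m * (f₀ x - fhat x) := by
          rw [div_mul_eq_mul_div, le_div_iff₀ hm]
          calc L * (x - τ i.castSucc) * m = L * (m * (x - τ i.castSucc)) := by ring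
            _ ≤ L * (f₀ x - fhat x) := by
                apply mul_le_mul_of_nonneg_left hb2 hL
            _ = L * (f₀ x - fhat x) * 1 := by ring
            _ ≤ _ := by nlinarith [hb2, mul_nonneg hm.le (sub_nonneg.2 hxl)]
  · -- crossing case
    rw [h₂ x hxI]
    have hsab : s ∈ Icc a b := ⟨le_trans hτi.1 hs.1, le_trans hs.2.le hτi1.2⟩
    have hfss : fhat s = fhat x := by rw [hfhatconst i s hs, hfx]
    have key : m * |s - x| ≤ |fhat x - f₀ x| := by
      rcases le_total s x with h | h
      · have hg := hgrow s hsab x hxab h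
        have hmn : 0 ≤ m * (x - s) := mul_nonneg hm.le (by linarith)
        have he1 : |s - x| = x - s := by rw [abs_sub_comm]; exact abs_of_nonneg (by linarith)
        have he2 : |fhat x - f₀ x| = f₀ x - fhat x := by
          rw [abs_sub_comm]; apply abs_of_nonneg; rw [← hfss, ← hfs]; linarith
        rw [he1, he2, ← hfss, ← hfs]; linarith
      · have hg := hgrow x hxab s hsab h
        have hmn : 0 ≤ m * (s - x) := mul_nonneg hm.le (by linarith)
        have he1 : |s - x| = s - x := abs_of_nonneg (by linarith)
        have he2 : |fhat x - f₀ x| = fhat x - f₀ x := by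
          apply abs_of_nonneg; rw [← hfss, ← hfs]; linarith
        rw [he1, he2, ← hfss, ← hfs]; linarith
    calc |ψ s - ψ x| ≤ L * |s - x| := hψ s hsab x hxab
      _ ≤ L / m * |fhat x - f₀ x| := by
          rw [div_mul_eq_mul_div, le_div_iff₀ hm]
          calc L * |s - x| * m = L * (m * |s - x|) := by ring
            _ ≤ L * |fhat x - f₀ x| := mul_le_mul_of_nonneg_left key hL
            _ = _ := by ring
  · -- f₀ < fhat throughout; ψbar x = ψ (τ i.succ)
    rw [h₂ x hxI]
    have hb1 : |ψ (τ i.succ) - ψ x| ≤ L * (τ i.succ - x) := by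
      have h' := hψ (τ i.succ) hτi1 x hxab
      have he : |τ i.succ - x| = τ i.succ - x := abs_of_nonneg (by linarith)
      rwa [he] at h'
    -- f₀ (τ i.succ) ≤ fhat (τ i.castSucc) by continuity
    have hlim : f₀ (τ i.succ) ≤ fhat (τ i.castSucc) := by
      have hcont : ContinuousWithinAt f₀ (Ico (τ i.castSucc) (τ i.succ)) (τ i.succ) := by
        have : ContinuousAt f₀ (τ i.succ) := (hf₀ _ hτi1).continuousAt
        exact this.continuousWithinAt
      haveI hne : (𝓝[Ico (τ i.castSucc) (τ i.succ)] (τ i.succ)).NeBot := by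
        apply mem_closure_iff_nhdsWithin_neBot.1
        rw [closure_Ico (ne_of_lt (hτmono ((Fin.castSucc_lt_succ : i.castSucc < i.succ))))]
        exact ⟨(hτmono ((Fin.castSucc_lt_succ : i.castSucc < i.succ))).le, le_rfl⟩
      refine le_of_tendsto hcont ?_
      filter_upwards [self_mem_nhdsWithin] with y hy
      exact (h₁ y hy).le
    have hb2 : m * (τ i.succ - x) ≤ fhat x - f₀ x := by
      have := hgrow x hxab (τ i.succ) hτi1 hxr.le
      rw [hfx]; linarith
    have habs : |fhat x - f₀ x| = fhat x - f₀ x :=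
      abs_of_nonneg (by nlinarith [hb2, mul_nonneg hm.le (sub_nonneg.2 hxr.le)])
    rw [habs]
    calc |ψ (τ i.succ) - ψ x| ≤ L * (τ i.succ - x) := hb1
      _ ≤ L / m * (fhat x - f₀ x) := by
          rw [div_mul_eq_mul_div, le_div_iff₀ hm]
          calc L * (τ i.succ - x) * m = L * (m * (τ i.succ - x)) := by ring
            _ ≤ L * (fhat x - f₀ x) := mul_le_mul_of_nonneg_left hb2 hL
            _ = _ := by ring
end

section
/- The isotonic least squares estimator equals the left slope of the greatest convex minorant of the cusum diagram: if Ĉ is the greatest convex minorant of the points (0,0), (i, Σ_{j≤i}Y_j) for i = 1,...,n, then the minimizer (f₁ ≤ ... ≤ fₙ) of Σᵢ(Yᵢ − fᵢ)² over nondecreasing vectors satisfies fᵢ = left-derivative of Ĉ at i. -/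
open Set Finset

namespace IsoGCMAux

noncomputable section

variable (n : ℕ) (hn : 0 < n) (f : Fin n → ℝ)

/-- extension of `f` to `ℕ`, constant after `n-1`. -/
def fe (j : ℕ) : ℝ := f ⟨min j (n-1), by omega⟩

/-- cumulative sums of `fe`. -/
def T (k : ℕ) : ℝ := ∑ j ∈ Finset.range k, fe n hn f j

/-- the `k`-th affine piece of the GCM candidate. -/
def pc (k : ℕ) (x : ℝ) : ℝ := T n hn f k + (x - (k : ℝ)) * fe n hn f k

/-- the candidate greatest convex minorant: max of the affine pieces. -/
def G (x : ℝ) : ℝ :=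
  (Finset.range n).sup' (Finset.nonempty_range_iff.2 hn.ne') (fun k => pc n hn f k x)

variable {n f}

lemma fe_eq {j : ℕ} (hj : j < n) : fe n hn f j = f ⟨j, hj⟩ := by
  simp [fe, Nat.min_eq_left (by omega : j ≤ n - 1)]

lemma fe_mono (hf : Monotone f) : Monotone (fe n hn f) := by
  intro a b hab
  exact hf (by simp only [Fin.mk_le_mk]; omega)

lemma pc_succ_sub (k : ℕ) (x : ℝ) :
    pc n hn f (k+1) x - pc n hn f k x
      = (x - ((k:ℝ)+1)) * (fe n hn f (k+1) - fe n hn f k) := by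
  simp only [pc, T, Finset.sum_range_succ]
  push_cast
  ring

lemma pc_le_pc_right (hf : Monotone f) {k m : ℕ} (hkm : k ≤ m) {x : ℝ}
    (hx : (m:ℝ) ≤ x) : pc n hn f k x ≤ pc n hn f m x := by
  induction m, hkm using Nat.le_induction with
  | base => exact le_refl _
  | succ m hm IH =>
      have h1 : (m:ℝ) ≤ x := by push_cast at hx ⊢; linarith
      have h2 : pc n hn f k x ≤ pc n hn f m x := IH h1
      have h3 := pc_succ_sub hn (f := f) m x
      have h4 : fe n hn f m ≤ fe n hn f (m+1) := fe_mono hn hf (Nat.le_succ m)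
      have h5 : (0:ℝ) ≤ (x - ((m:ℝ)+1)) * (fe n hn f (m+1) - fe n hn f m) := by
        apply mul_nonneg <;> [skip; linarith]
        push_cast at hx; linarith
      linarith

lemma pc_le_pc_left (hf : Monotone f) {k m : ℕ} (hmk : m ≤ k) {x : ℝ}
    (hx : x ≤ (m:ℝ)+1) : pc n hn f k x ≤ pc n hn f m x := by
  induction k, hmk using Nat.le_induction with
  | base => exact le_refl _
  | succ k hk IH =>
      have h2 : pc n hn f k x ≤ pc n hn f m x := IH
      have h3 := pc_succ_sub hn (f := f) k x
      have h4 : fe n hn f k ≤ fe n hn f (k+1) := fe_mono hn hf (Nat.le_succ k)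
      have hmk' : (m:ℝ) ≤ (k:ℝ) := by exact_mod_cast hk
      have h5 : (x - ((k:ℝ)+1)) * (fe n hn f (k+1) - fe n hn f k) ≤ 0 :=
        mul_nonpos_of_nonpos_of_nonneg (by linarith) (by linarith)
      linarith

lemma G_eq_pc (hf : Monotone f) {m : ℕ} (hm : m < n) {x : ℝ}
    (h1 : (m:ℝ) ≤ x) (h2 : x ≤ (m:ℝ)+1) : G n hn f x = pc n hn f m x := by
  rw [G]
  apply le_antisymm
  · apply Finset.sup'_le
    intro k hk
    rcases le_or_gt k m with h | h
    · exact pc_le_pc_right hn hf h h1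
    · exact pc_le_pc_left hn hf h.le h2
  · exact Finset.le_sup' (fun k => pc n hn f k x) (Finset.mem_range.2 hm)

lemma G_nat (hf : Monotone f) {k : ℕ} (hk : k ≤ n) : G n hn f (k:ℝ) = T n hn f k := by
  rcases lt_or_eq_of_le hk with h | he
  · rw [G_eq_pc hn hf h le_rfl (by linarith)]
    simp [pc]
  · rw [he]
    have h1 : n - 1 < n := by omega
    have hc : ((n-1 : ℕ) : ℝ) = (n:ℝ) - 1 := by
      push_cast [Nat.cast_sub (by omega : 1 ≤ n)]; ring
    rw [G_eq_pc hn hf h1 (by rw [hc]; linarith) (by rw [hc]; linarith)]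
    have h2 : (n-1) + 1 = n := by omega
    have h3 : T n hn f ((n-1)+1) = T n hn f (n-1) + fe n hn f (n-1) := Finset.sum_range_succ _ _
    rw [h2] at h3
    rw [pc, hc, h3]
    ring

lemma G_convex (hf : Monotone f) : ConvexOn ℝ univ (G n hn f) := by
  refine ⟨convex_univ, fun x _ y _ a b ha hb hab => ?_⟩
  simp only [smul_eq_mul, G]
  apply Finset.sup'_le
  intro k hk
  have h1 : pc n hn f k (a*x + b*y) = a * pc n hn f k x + b * pc n hn f k y := by
    simp only [pc]
    linear_combination ((k:ℝ) * fe n hn f k - T n hn f k) * hab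
  rw [h1]
  refine add_le_add (mul_le_mul_of_nonneg_left ?_ ha) (mul_le_mul_of_nonneg_left ?_ hb) <;>
    exact Finset.le_sup' (fun j => pc n hn f j _) hk

end

end IsoGCMAux

open IsoGCMAux

/-- The isotonic least squares estimator equals the left slope of the
greatest convex minorant of the cusum diagram. -/
theorem isotonic_lse_is_gcm_slope
    (n : ℕ) (hn : 0 < n) (Y : ℕ → ℝ)
    (S : ℕ → ℝ) (hS : ∀ k, S k = ∑ j ∈ Finset.range k, Y j)
    (C : ℝ → ℝ)
    (hC : ∀ x ∈ Icc (0 : ℝ) n, C x =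
        sSup {y | ∃ c : ℝ → ℝ, ConvexOn ℝ (Icc (0 : ℝ) n) c ∧
          (∀ k ≤ n, c k ≤ S k) ∧ y = c x})
    (fhat : Fin n → ℝ) (hmono : Monotone fhat)
    (hmin : ∀ g : Fin n → ℝ, Monotone g →
        ∑ i : Fin n, (Y i.val - fhat i) ^ 2 ≤ ∑ i : Fin n, (Y i.val - g i) ^ 2) :
    ∀ i : Fin n, fhat i = derivWithin C (Iio ((i : ℝ) + 1)) ((i : ℝ) + 1) := by
  classical
  -- directional optimality
  have dir : ∀ (h : Fin n → ℝ) (ε₀ : ℝ), 0 < ε₀ →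
      (∀ ε : ℝ, 0 < ε → ε < ε₀ → Monotone (fun i => fhat i + ε * h i)) →
      ∑ i : Fin n, (Y i.val - fhat i) * h i ≤ 0 := by
    intro h ε₀ hε₀ hfeas
    set A := ∑ i : Fin n, (Y i.val - fhat i) * h i with hA_def
    set B := ∑ i : Fin n, h i ^ 2 with hB_def
    have hB : 0 ≤ B := Finset.sum_nonneg fun i _ => sq_nonneg _
    have key : ∀ ε : ℝ, 0 < ε → ε < ε₀ → 2 * ε * A ≤ ε^2 * B := by
      intro ε h1 h2
      have hm := hmin _ (hfeas ε h1 h2)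
      have expand : ∑ i : Fin n, (Y i.val - (fhat i + ε * h i))^2
          = ∑ i : Fin n, (Y i.val - fhat i)^2 - 2*ε*A + ε^2*B := by
        rw [hA_def, hB_def, Finset.mul_sum, Finset.mul_sum, ← Finset.sum_sub_distrib,
          ← Finset.sum_add_distrib]
        exact Finset.sum_congr rfl fun i _ => by ring
      rw [expand] at hm
      linarith
    by_contra hA
    push_neg at hA
    set ε := min (ε₀/2) (A / (B+1)) with hε_def
    have hε1 : 0 < ε := lt_min (by linarith) (div_pos hA (by linarith))
    have hε2 : ε < ε₀ := lt_of_le_of_lt (min_le_left _ _) (by linarith)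
    have hk := key ε hε1 hε2
    have hεle : ε ≤ A/(B+1) := min_le_right _ _
    have h3 : ε * (B+1) ≤ A := (le_div_iff₀ (by linarith)).1 hεle
    nlinarith [mul_le_mul_of_nonneg_left h3 hε1.le, mul_pos hε1 hA, sq_nonneg ε]
  -- the residual function
  set D : ℕ → ℝ := fun j => Y j - fe n hn fhat j with hD_def
  have hDval : ∀ i : Fin n, D i.val = Y i.val - fhat i := by
    intro i
    simp [hD_def, fe_eq hn i.isLt]
  have hST : ∀ k : ℕ, S k - T n hn fhat k = ∑ j ∈ Finset.range k, D j := by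
    intro k
    rw [hS, T, ← Finset.sum_sub_distrib]
  -- total sum of residuals is zero
  have hDsum : ∑ j ∈ Finset.range n, D j = 0 := by
    have e : ∀ c : ℝ, ∑ i : Fin n, (Y i.val - fhat i) * c = (∑ j ∈ Finset.range n, D j) * c := by
      intro c
      rw [← Finset.sum_mul, ← Fin.sum_univ_eq_sum_range D n]
      congr 1
      exact Finset.sum_congr rfl fun i _ => by rw [hDval i]
    have h1 : (∑ j ∈ Finset.range n, D j) * 1 ≤ 0 := by
      rw [← e 1]
      exact dir (fun _ => 1) 1 one_pos (fun ε hε _ => fun i j hij => by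
        simp only [mul_one]; have := hmono hij; linarith)
    have h2 : (∑ j ∈ Finset.range n, D j) * (-1) ≤ 0 := by
      rw [← e (-1)]
      exact dir (fun _ => -1) 1 one_pos (fun ε hε _ => fun i j hij => by
        simp only [mul_neg, mul_one]; have := hmono hij; linarith)
    nlinarith
  -- splitting of sums by a threshold
  have hsplit : ∀ k : ℕ, k ≤ n →
      ∑ j ∈ Finset.range n, (if k ≤ j then D j else 0)
        = - ∑ j ∈ Finset.range k, D j := by
    intro k hk
    have h1 : ∑ j ∈ Finset.range k, D j
        = ∑ j ∈ Finset.range n, (if j < k then D j else 0) := by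
      rw [← Finset.sum_subset (Finset.range_subset_range.2 hk)
        (fun x _ hx => if_neg (by simp only [Finset.mem_range] at hx; omega))]
      exact Finset.sum_congr rfl fun j hj => (if_pos (Finset.mem_range.1 hj)).symm
    have h2 : ∑ j ∈ Finset.range n, ((if j < k then D j else 0) + (if k ≤ j then D j else 0))
        = ∑ j ∈ Finset.range n, D j := by
      apply Finset.sum_congr rfl
      intro j _
      rcases lt_or_ge j k with h | h
      · rw [if_pos h, if_neg (by omega)]; ring
      · rw [if_neg (by omega), if_pos h]; ring
    rw [Finset.sum_add_distrib] at h2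
    rw [hDsum] at h2
    rw [h1]
    linarith
  -- tail sums of residuals nonpositive, i.e. partial sums nonneg
  have htail : ∀ k : ℕ, k ≤ n → 0 ≤ ∑ j ∈ Finset.range k, D j := by
    intro k hk
    have hd := dir (fun i => if k ≤ i.val then 1 else 0) 1 one_pos ?_
    · have e : ∑ i : Fin n, (Y i.val - fhat i) * (if k ≤ i.val then 1 else 0)
          = ∑ j ∈ Finset.range n, (if k ≤ j then D j else 0) := by
        rw [← Fin.sum_univ_eq_sum_range (fun j => if k ≤ j then D j else 0) n]
        apply Finset.sum_congr rfl
        intro i _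
        rcases le_or_gt k i.val with h | h
        · rw [if_pos h, if_pos h, hDval i, mul_one]
        · rw [if_neg (by omega), if_neg (by omega), mul_zero]
      rw [e, hsplit k hk] at hd
      linarith
    · intro ε hε _ i j hij
      simp only
      rcases le_or_gt k i.val with h | h
      · rw [if_pos h, if_pos (le_trans h hij)]
        have := hmono hij; linarith
      · rcases le_or_gt k j.val with h' | h'
        · rw [if_neg (by omega), if_pos h']
          have := hmono hij
          nlinarith
        · rw [if_neg (by omega), if_neg (by omega)]
          have := hmono hij; linarith
  -- at jumps the partial sums of residuals vanish
  have hjump : ∀ k : ℕ, 0 < k → k < n → fe n hn fhat (k-1) < fe n hn fhat k →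
      ∑ j ∈ Finset.range k, D j = 0 := by
    intro k hk0 hkn hjmp
    set ε₀ := fe n hn fhat k - fe n hn fhat (k-1) with hε₀_def
    have hε₀ : 0 < ε₀ := by linarith
    have hd := dir (fun i => if k ≤ i.val then -1 else 0) ε₀ hε₀ ?_
    · have e : ∑ i : Fin n, (Y i.val - fhat i) * (if k ≤ i.val then -1 else 0)
          = - ∑ j ∈ Finset.range n, (if k ≤ j then D j else 0) := by
        rw [← Finset.sum_neg_distrib, ← Fin.sum_univ_eq_sum_range
          (fun j => -(if k ≤ j then D j else 0)) n]
        apply Finset.sum_congr rfl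
        intro i _
        rcases le_or_gt k i.val with h | h
        · rw [if_pos h, if_pos h, hDval i]; ring
        · rw [if_neg (by omega), if_neg (by omega)]; ring
      rw [e, hsplit k hkn.le] at hd
      have := htail k hkn.le
      linarith
    · intro ε hε hεlt i j hij
      simp only
      have hfi : ∀ m : Fin n, k ≤ m.val → fe n hn fhat k ≤ fhat m := by
        intro m hm
        rw [fe_eq hn hkn]
        exact hmono (by simp only [Fin.le_def]; exact hm)
      have hfi' : ∀ m : Fin n, m.val < k → fhat m ≤ fe n hn fhat (k-1) := by
        intro m hm
        rw [fe_eq hn (by omega : k - 1 < n)]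
        exact hmono (by simp only [Fin.le_def]; omega)
      rcases le_or_gt k i.val with h | h
      · rw [if_pos h, if_pos (le_trans h hij)]
        have := hmono hij; linarith
      · rcases le_or_gt k j.val with h' | h'
        · rw [if_neg (by omega), if_pos h']
          have h1 := hfi' i h
          have h2 := hfi j h'
          simp only [mul_neg, mul_one, mul_zero]
          linarith
        · rw [if_neg (by omega), if_neg (by omega)]
          have := hmono hij; linarith
  -- G k ≤ S k at the integer points
  have hGk : ∀ k : ℕ, k ≤ n → G n hn fhat (k:ℝ) ≤ S k := by
    intro k hk
    rw [G_nat hn hmono hk]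
    have := htail k hk
    have := hST k
    linarith
  have hGconv : ConvexOn ℝ (Icc (0:ℝ) n) (G n hn fhat) :=
    (G_convex hn hmono).subset (subset_univ _) (convex_Icc _ _)
  -- every convex minorant lies below G
  have hub : ∀ c : ℝ → ℝ, ConvexOn ℝ (Icc (0:ℝ) n) c → (∀ k ≤ n, c k ≤ S k) →
      ∀ x ∈ Icc (0:ℝ) n, c x ≤ G n hn fhat x := by
    intro c hc hcS x hx
    obtain ⟨hx0, hxn⟩ := hx
    -- the segment index m
    obtain ⟨m, hmn, hmx, hxm⟩ : ∃ m : ℕ, m < n ∧ (m:ℝ) ≤ x ∧ x ≤ (m:ℝ)+1 := by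
      rcases le_or_gt ⌊x⌋₊ (n-1) with h | h
      · exact ⟨⌊x⌋₊, by omega, Nat.floor_le hx0, (Nat.lt_floor_add_one x).le⟩
      · have h1 : (n:ℝ) ≤ x := le_trans (by exact_mod_cast Nat.cast_le.2 (by omega : n ≤ ⌊x⌋₊))
          (Nat.floor_le hx0)
        have hxe : x = (n:ℝ) := le_antisymm hxn h1
        refine ⟨n-1, by omega, ?_, ?_⟩ <;>
          rw [hxe, Nat.cast_pred hn] <;> linarith
    set P : ℕ → Prop := fun k => ∑ j ∈ Finset.range k, D j = 0 with hP_def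
    set a := Nat.findGreatest P m with ha_def
    have haP : P a := Nat.findGreatest_spec (Nat.zero_le m) (by simp [hP_def])
    have ham : a ≤ m := Nat.findGreatest_le m
    have hbex : ∃ k, m < k ∧ k ≤ n ∧ P k := ⟨n, hmn, le_rfl, hDsum⟩
    set b := Nat.find hbex with hb_def
    obtain ⟨hmb, hbn, hbP⟩ := Nat.find_spec hbex
    have hbmin : ∀ k, k < b → ¬(m < k ∧ k ≤ n ∧ P k) := fun k hk => Nat.find_min hbex hk
    -- fe is constant on [a, b)
    have hconst : ∀ j, a ≤ j → j < b → fe n hn fhat j = fe n hn fhat a := by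
      intro j hj1 hj2
      induction j, hj1 using Nat.le_induction with
      | base => rfl
      | succ j hj IH =>
          have hjb : j < b := by omega
          have h1 := IH hjb
          have hle : fe n hn fhat j ≤ fe n hn fhat (j+1) :=
            fe_mono hn hmono (Nat.le_succ j)
          rcases eq_or_lt_of_le hle with he | hlt
          · rw [← he, h1]
          · exfalso
            have hj1n : j + 1 < n := by omega
            have hPj : P (j+1) := by
              have h2 := hjump (j+1) (by omega) hj1n (by rw [Nat.add_sub_cancel]; exact hlt)
              exact h2
            rcases le_or_gt (j+1) m with hc1 | hc1
            · have := Nat.le_findGreatest hc1 hPj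
              omega
            · exact hbmin (j+1) hj2 ⟨hc1, by omega, hPj⟩
    have hab : a < b := by omega
    -- partial sums of fe between a and a point ≤ b
    have hTlin : ∀ k, a ≤ k → k ≤ b →
        T n hn fhat k = T n hn fhat a + ((k:ℝ) - (a:ℝ)) * fe n hn fhat a := by
      intro k hk1 hk2
      induction k, hk1 using Nat.le_induction with
      | base => simp
      | succ k hk IH =>
          have h1 := IH (by omega)
          rw [T, Finset.sum_range_succ, ← T, h1, hconst k hk (by omega)]
          push_cast
          ring
    have hSa : S a = T n hn fhat a := by have := hST a; rw [haP] at this; linarith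
    have hSb : S b = T n hn fhat b := by have := hST b; rw [hbP] at this; linarith
    -- the chord argument
    have ha_le_x : (a:ℝ) ≤ x := le_trans (by exact_mod_cast ham) hmx
    have hx_le_b : x ≤ (b:ℝ) := le_trans hxm (by exact_mod_cast hmb)
    have hba : (0:ℝ) < (b:ℝ) - (a:ℝ) := by
      have : (a:ℝ) < (b:ℝ) := by exact_mod_cast hab
      linarith
    set lam : ℝ := ((b:ℝ) - x) / ((b:ℝ) - a) with hlam_def
    set mu : ℝ := (x - (a:ℝ)) / ((b:ℝ) - a) with hmu_def
    have hlam : 0 ≤ lam := div_nonneg (by linarith) hba.le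
    have hmu : 0 ≤ mu := div_nonneg (by linarith) hba.le
    have hsum1 : lam + mu = 1 := by
      rw [hlam_def, hmu_def, ← add_div, div_eq_one_iff_eq hba.ne']
      ring
    have hcomb : lam * (a:ℝ) + mu * (b:ℝ) = x := by
      rw [hlam_def, hmu_def]
      field_simp
      ring
    have haIcc : (a:ℝ) ∈ Icc (0:ℝ) n := ⟨by positivity, by exact_mod_cast (show a ≤ n by omega)⟩
    have hbIcc : (b:ℝ) ∈ Icc (0:ℝ) n := ⟨by positivity, by exact_mod_cast hbn⟩
    have hcx := hc.2 haIcc hbIcc hlam hmu hsum1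
    rw [smul_eq_mul, smul_eq_mul, hcomb] at hcx
    have h4 : c x ≤ lam * S a + mu * S b :=
      le_trans hcx (add_le_add (mul_le_mul_of_nonneg_left (hcS a (by omega)) hlam)
        (mul_le_mul_of_nonneg_left (hcS b hbn) hmu))
    have hTb := hTlin b hab.le le_rfl
    have hmu_ba : mu * ((b:ℝ) - a) = x - a := by
      rw [hmu_def]; field_simp
    have h5 : lam * S a + mu * S b = T n hn fhat a + (x - (a:ℝ)) * fe n hn fhat a := by
      rw [hSa, hSb, hTb]
      have : lam * T n hn fhat a + mu * (T n hn fhat a + ((b:ℝ) - a) * fe n hn fhat a)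
          = (lam + mu) * T n hn fhat a + (mu * ((b:ℝ) - a)) * fe n hn fhat a := by ring
      rw [this, hsum1, hmu_ba, one_mul]
    have h6 : G n hn fhat x = T n hn fhat a + (x - (a:ℝ)) * fe n hn fhat a := by
      rw [G_eq_pc hn hmono hmn hmx hxm, pc, hTlin m ham (by omega),
        hconst m ham (by omega)]
      ring
    rw [h6]
    rw [h5] at h4
    exact h4
  -- C = G on [0, n]
  have hCG : ∀ x ∈ Icc (0:ℝ) n, C x = G n hn fhat x := by
    intro x hx
    rw [hC x hx]
    have hmem : G n hn fhat x ∈ {y | ∃ c : ℝ → ℝ, ConvexOn ℝ (Icc (0 : ℝ) n) c ∧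
        (∀ k ≤ n, c k ≤ S k) ∧ y = c x} := ⟨G n hn fhat, hGconv, fun k hk => hGk k hk, rfl⟩
    have hbdd : ∀ y ∈ {y | ∃ c : ℝ → ℝ, ConvexOn ℝ (Icc (0 : ℝ) n) c ∧
        (∀ k ≤ n, c k ≤ S k) ∧ y = c x}, y ≤ G n hn fhat x := by
      rintro y ⟨c, hc1, hc2, rfl⟩
      exact hub c hc1 hc2 x hx
    exact le_antisymm (csSup_le ⟨_, hmem⟩ hbdd) (le_csSup ⟨_, hbdd⟩ hmem)
  -- conclusion: left derivative
  intro i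
  have hin : (i.val:ℝ) + 1 ≤ (n:ℝ) := by exact_mod_cast Nat.succ_le_of_lt i.isLt
  have hi0 : (0:ℝ) ≤ (i.val:ℝ) := by positivity
  set x₀ : ℝ := (i.val:ℝ) + 1 with hx₀_def
  have hx₀Icc : x₀ ∈ Icc (0:ℝ) n := ⟨by positivity, hin⟩
  have hder : HasDerivWithinAt (pc n hn fhat i.val) (fe n hn fhat i.val) (Iio x₀) x₀ := by
    have h1 : HasDerivAt (fun x : ℝ => T n hn fhat i.val + (x - (i.val:ℝ)) * fe n hn fhat i.val)
        (1 * fe n hn fhat i.val) x₀ :=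
      (((hasDerivAt_id x₀).sub_const _).mul_const _).const_add _
    rw [one_mul] at h1
    exact h1.hasDerivWithinAt
  have heq : HasDerivWithinAt C (fe n hn fhat i.val) (Iio x₀) x₀ := by
    apply hder.congr_of_eventuallyEq
    · filter_upwards [Ioo_mem_nhdsLT (show (i.val:ℝ) < x₀ by rw [hx₀_def]; linarith)]
        with y hy
      obtain ⟨hy1, hy2⟩ := hy
      rw [hCG y ⟨by linarith, by linarith⟩,
        G_eq_pc hn hmono i.isLt hy1.le (by rw [hx₀_def] at hy2; linarith)]
    · rw [hCG x₀ hx₀Icc, G_eq_pc hn hmono i.isLt (by rw [hx₀_def]; linarith) (by rw [hx₀_def])]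
  have hfin : fe n hn fhat i.val = fhat i := by
    rw [fe_eq hn i.isLt]
  rw [← hfin]
  have := heq.derivWithin (uniqueDiffWithinAt_Iio x₀)
  rw [← this]
end
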